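/- Let G be a k-tree with at least k+1 vertices and v a terminal vertex of G. Then G - v is a k-tree. -/

import Mathlib

/-- `G` is a `k`-tree: either `G ≃ K_k`, or `G` has a vertex `v` whose neighborhood
induces `K_k` such that `G - v` is a `k`-tree. -/
inductive IsKTree (k : ℕ) : {V : Type} → SimpleGraph V → Prop
  | base {V : Type} (G : SimpleGraph V) (h : Nonempty (G ≃g SimpleGraph.completeGraph (Fin k))) :
      IsKTree k G
  | extend {V : Type} (G : SimpleGraph V) (v : V)
      (hnb : Nonempty ((G.induce (G.neighborSet v)) ≃g SimpleGraph.completeGraph (Fin k)))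
      (hrec : IsKTree k (G.induce {u : V | u ≠ v})) : IsKTree k G

/-- A terminal vertex of a `k`-tree: a vertex of degree `k` (or any vertex if `G ≃ K_k`). -/
def IsTerminal (k : ℕ) {V : Type} (G : SimpleGraph V) (v : V) : Prop :=
  (G.neighborSet v).ncard = k ∨ Nonempty (G ≃g SimpleGraph.completeGraph (Fin k))

theorem isKTree_iso {k : ℕ} : ∀ {V : Type} {G : SimpleGraph V}, IsKTree k G →
    ∀ {W : Type} (H : SimpleGraph W), Nonempty (G ≃g H) → IsKTree k H := by
  intro V G hG
  induction hG with
  | base G h =>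
    rintro W H ⟨e⟩
    exact .base H ⟨h.some.comp e.symm⟩
  | extend G v hnb hrec ih =>
    rintro W H ⟨e⟩
    refine .extend H (e v) ⟨?_⟩ ?_
    · refine hnb.some.comp (SimpleGraph.Iso.symm ?_)
      refine ⟨e.toEquiv.subtypeEquiv fun u => ?_, ?_⟩
      · simp [SimpleGraph.mem_neighborSet, e.map_adj_iff]
      · rintro ⟨a, ha⟩ ⟨b, hb⟩
        simp [Equiv.subtypeEquiv, e.map_adj_iff]
    · refine ih _ ⟨⟨e.toEquiv.subtypeEquiv fun u => ?_, ?_⟩⟩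
      · simp
      · rintro ⟨a, ha⟩ ⟨b, hb⟩
        simp [Equiv.subtypeEquiv, e.map_adj_iff]

lemma adj_of_complete {k : ℕ} {V : Type} {G : SimpleGraph V} {s : Set V}
    (e : G.induce s ≃g SimpleGraph.completeGraph (Fin k)) {x y : V}
    (hx : x ∈ s) (hy : y ∈ s) (h : x ≠ y) : G.Adj x y := by
  have h2 := e.map_adj_iff (v := ⟨x, hx⟩) (w := ⟨y, hy⟩)
  simp only [SimpleGraph.completeGraph, SimpleGraph.top_adj] at h2
  exact h2.mp fun hc => h (Subtype.ext_iff.mp (e.injective hc))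

lemma ncard_of_complete {k : ℕ} {V : Type} {G : SimpleGraph V} {s : Set V}
    (e : G.induce s ≃g SimpleGraph.completeGraph (Fin k)) : s.ncard = k := by
  rw [← Nat.card_coe_set_eq, Nat.card_congr e.toEquiv, Nat.card_eq_fintype_card,
    Fintype.card_fin]

theorem ktree_aux {k : ℕ} : ∀ {V : Type} {G : SimpleGraph V}, IsKTree k G →
    ∀ (_ : Finite V) (_ : k + 1 ≤ Nat.card V) (v : V) (_ : (G.neighborSet v).ncard = k),
    IsKTree k (G.induce {u | u ≠ v}) := by
  intro V₀ G₀ hG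
  induction hG with
  | @base V G h =>
    intro _ hcard v _
    exfalso
    have : Nat.card V = k := by
      rw [Nat.card_congr h.some.toEquiv, Nat.card_eq_fintype_card, Fintype.card_fin]
    omega
  | @extend V G w hnb hrec ih =>
    intro hfin hcard v hdeg
    classical
    by_cases hwv : w = v
    · subst hwv; exact hrec
    have hvw : v ≠ w := fun h => hwv h.symm
    have hNw : (G.neighborSet w).ncard = k := ncard_of_complete hnb.some
    by_cases hadj : G.Adj w v
    · -- v adjacent to w: swap them
      have hvNw : v ∈ G.neighborSet w := hadj
      have hwNw : w ∉ G.neighborSet w := fun h => G.irrefl h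
      have hsub : insert w (G.neighborSet w \ {v}) ⊆ G.neighborSet v := by
        rintro x hx
        rcases Set.mem_insert_iff.mp hx with rfl | ⟨hxNw, hxv⟩
        · exact hadj.symm
        · exact (adj_of_complete hnb.some hxNw hvNw hxv).symm
      have hins : (insert w (G.neighborSet w \ {v})).ncard = k := by
        rw [Set.ncard_insert_of_notMem (by simp [hwNw]) (Set.toFinite _),
          Set.ncard_diff_singleton_of_mem hvNw, hNw]
        have : 0 < (G.neighborSet w).ncard :=
          (Set.ncard_pos (Set.toFinite _)).mpr ⟨v, hvNw⟩
        omega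
      have hEq : G.neighborSet v = insert w (G.neighborSet w \ {v}) :=
        (Set.eq_of_subset_of_ncard_le hsub (by rw [hdeg, hins]) (Set.toFinite _)).symm
      have key : ∀ x, x ≠ v → x ≠ w → (G.Adj v x ↔ G.Adj w x) := by
        intro x hxv hxw
        constructor
        · intro hx
          have hx' : x ∈ G.neighborSet v := hx
          rw [hEq] at hx'
          rcases Set.mem_insert_iff.mp hx' with rfl | ⟨hxNw, _⟩
          · exact absurd rfl hxw
          · exact hxNw
        · intro hx
          have hx' : x ∈ G.neighborSet v := by
            rw [hEq]; exact Set.mem_insert_iff.mpr (Or.inr ⟨hx, Set.mem_singleton_iff.not.mpr hxv⟩)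
          exact hx'
      refine isKTree_iso hrec _ ⟨⟨(Equiv.swap v w).subtypeEquiv fun u => ?_, ?_⟩⟩
      · simp only [Set.mem_setOf_eq]
        exact not_congr ⟨fun h => by rw [h]; exact Equiv.swap_apply_right v w,
          fun h => by have h2 := congrArg (Equiv.swap v w) h; simpa using h2⟩
      · have gen : ∀ a b : V, a ≠ w → b ≠ w →
            (G.Adj (Equiv.swap v w a) (Equiv.swap v w b) ↔ G.Adj a b) := by
          intro a b ha hb
          by_cases hav : a = v <;> by_cases hbv : b = v
          · subst hav; subst hbv; simp
          · subst hav
            rw [Equiv.swap_apply_left, Equiv.swap_apply_of_ne_of_ne hbv hb]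
            exact (key b hbv hb).symm
          · rw [hbv, Equiv.swap_apply_left, Equiv.swap_apply_of_ne_of_ne hav ha,
              G.adj_comm a w, G.adj_comm a v]
            exact (key a hav ha).symm
          · rw [Equiv.swap_apply_of_ne_of_ne hav ha, Equiv.swap_apply_of_ne_of_ne hbv hb]
        rintro ⟨a, ha⟩ ⟨b, hb⟩
        simpa [Equiv.subtypeEquiv] using gen a b ha hb
    · -- v not adjacent to w
      have hwNv : w ∉ G.neighborSet v := fun h => hadj h.symm
      have hvNv : v ∉ G.neighborSet v := fun h => G.irrefl h
      have hbig : k + 2 ≤ Nat.card V := by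
        have h1 : (insert v (insert w (G.neighborSet v))).ncard = k + 2 := by
          rw [Set.ncard_insert_of_notMem (by simp [hvw, hvNv]) (Set.toFinite _),
            Set.ncard_insert_of_notMem hwNv (Set.toFinite _), hdeg]
        calc k + 2 = (insert v (insert w (G.neighborSet v))).ncard := h1.symm
          _ ≤ (Set.univ : Set V).ncard :=
              Set.ncard_le_ncard (Set.subset_univ _) (Set.toFinite _)
          _ = Nat.card V := Set.ncard_univ V
      have hcard' : k + 1 ≤ Nat.card {u : V | u ≠ w} := by
        have h2 : {u : V | u ≠ w} = Set.univ \ {w} := by ext; simp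
        rw [Nat.card_coe_set_eq, h2, Set.ncard_diff_singleton_of_mem (Set.mem_univ w)
          , Set.ncard_univ]
        omega
      have hdeg' : ((G.induce {u | u ≠ w}).neighborSet (⟨v, hvw⟩ : {u : V | u ≠ w})).ncard
          = k := by
        have e2 : ↥((G.induce {u | u ≠ w}).neighborSet (⟨v, hvw⟩ : {u : V | u ≠ w})) ≃
            ↥(G.neighborSet v) :=
          { toFun := fun x => ⟨x.1.1, x.2⟩
            invFun := fun y => ⟨⟨y.1, fun h => hwNv (h ▸ y.2)⟩, y.2⟩
            left_inv := fun _ => rfl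
            right_inv := fun _ => rfl }
        rw [← Nat.card_coe_set_eq, Nat.card_congr e2, Nat.card_coe_set_eq, hdeg]
      have hrec' := ih (Finite.of_injective _ Subtype.val_injective) hcard' ⟨v, hvw⟩ hdeg'
      refine IsKTree.extend _ (⟨w, hwv⟩ : {u : V | u ≠ v}) ⟨?_⟩ ?_
      · refine hnb.some.comp ?_
        exact
          { toFun := fun x => ⟨x.1.1, x.2⟩
            invFun := fun y => ⟨⟨y.1, fun h => hadj (h ▸ y.2)⟩, y.2⟩
            left_inv := fun _ => rfl
            right_inv := fun _ => rfl
            map_rel_iff' := Iff.rfl }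
      · refine isKTree_iso hrec' _ ⟨?_⟩
        exact
          { toFun := fun x => ⟨⟨x.1.1, fun h => x.2 (Subtype.ext h)⟩,
              fun h => x.1.2 (Subtype.ext_iff.mp h)⟩
            invFun := fun x => ⟨⟨x.1.1, fun h => x.2 (Subtype.ext h)⟩,
              fun h => x.1.2 (Subtype.ext_iff.mp h)⟩
            left_inv := fun _ => rfl
            right_inv := fun _ => rfl
            map_rel_iff' := Iff.rfl }

/-- Removing a terminal vertex from a `k`-tree with at least `k + 1` vertices
yields a `k`-tree. -/
theorem kTree_remove_terminal {V : Type} [Fintype V] (k : ℕ) (G : SimpleGraph V)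
    (hG : IsKTree k G) (hcard : k + 1 ≤ Fintype.card V)
    (v : V) (hv : IsTerminal k G v) :
    IsKTree k (G.induce {u : V | u ≠ v}) := by
  rcases hv with hdeg | he
  · exact ktree_aux hG (Finite.of_fintype V) (by rw [Nat.card_eq_fintype_card]; exact hcard)
      v hdeg
  · exfalso
    have : Fintype.card V = k := by
      rw [← Fintype.card_fin k]
      exact Fintype.card_congr he.some.toEquiv
    omega
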